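/- arXiv:2605.01658 — 3 statements merged into one kernel-verified Lean document; each statement's English description precedes it below -/
import Mathlib

section
/- With the notation of the previous statement, the solution Y of the Volterra equation satisfies ‖Y(x) − I‖ ≤ C (∫_x^∞ |q(s)| ds) · exp(C ∫_x^∞ |q(s)| ds) for all x ∈ ℝ. -/
open scoped Matrix.Norms.L2Operator ComplexConjugate
open MeasureTheory


lemma aux_norm_le_one {A : Matrix (Fin 2) (Fin 2) ℂ} (h1 : A.conjTranspose = A) (h2 : A * A = A) :
    ‖A‖ ≤ 1 := by
  have h := Matrix.l2_opNorm_conjTranspose_mul_self A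
  rw [h1, h2] at h
  nlinarith [norm_nonneg A]

lemma aux_sigmap : ‖(!![(0:ℂ),1;0,0] : Matrix (Fin 2) (Fin 2) ℂ)‖ ≤ 1 := by
  have h := Matrix.l2_opNorm_conjTranspose_mul_self (!![(0:ℂ),1;0,0] : Matrix (Fin 2) (Fin 2) ℂ)
  have e1 : (!![(0:ℂ),1;0,0] : Matrix (Fin 2) (Fin 2) ℂ).conjTranspose * !![(0:ℂ),1;0,0]
      = !![(0:ℂ),0;0,1] := by
    ext i j
    fin_cases i <;> fin_cases j <;>
      simp [Matrix.mul_apply, Fin.sum_univ_two, Matrix.conjTranspose_apply]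
  rw [e1] at h
  have hd : ‖(!![(0:ℂ),0;0,1] : Matrix (Fin 2) (Fin 2) ℂ)‖ ≤ 1 := by
    apply aux_norm_le_one
    · ext i j; fin_cases i <;> fin_cases j <;> simp [Matrix.conjTranspose_apply]
    · ext i j; fin_cases i <;> fin_cases j <;> simp [Matrix.mul_apply, Fin.sum_univ_two]
  nlinarith [norm_nonneg (!![(0:ℂ),1;0,0] : Matrix (Fin 2) (Fin 2) ℂ)]

lemma aux_sigmam : ‖(!![(0:ℂ),0;1,0] : Matrix (Fin 2) (Fin 2) ℂ)‖ ≤ 1 := by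
  have e : (!![(0:ℂ),0;1,0] : Matrix (Fin 2) (Fin 2) ℂ)
      = (!![(0:ℂ),1;0,0] : Matrix (Fin 2) (Fin 2) ℂ).conjTranspose := by
    ext i j; fin_cases i <;> fin_cases j <;> simp [Matrix.conjTranspose_apply]
  rw [e, Matrix.l2_opNorm_conjTranspose]
  exact aux_sigmap

lemma aux_diag_norm (a b : ℂ) : ‖(!![a,0;0,b] : Matrix (Fin 2) (Fin 2) ℂ)‖ ≤ ‖a‖ + ‖b‖ := by
  have hd : (!![a,0;0,b] : Matrix (Fin 2) (Fin 2) ℂ)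
      = a • !![(1:ℂ),0;0,0] + b • !![(0:ℂ),0;0,1] := by
    ext i j; fin_cases i <;> fin_cases j <;> simp
  have h1 : ‖(!![(1:ℂ),0;0,0] : Matrix (Fin 2) (Fin 2) ℂ)‖ ≤ 1 := by
    apply aux_norm_le_one
    · ext i j; fin_cases i <;> fin_cases j <;> simp [Matrix.conjTranspose_apply]
    · ext i j; fin_cases i <;> fin_cases j <;> simp [Matrix.mul_apply, Fin.sum_univ_two]
  have h2 : ‖(!![(0:ℂ),0;0,1] : Matrix (Fin 2) (Fin 2) ℂ)‖ ≤ 1 := by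
    apply aux_norm_le_one
    · ext i j; fin_cases i <;> fin_cases j <;> simp [Matrix.conjTranspose_apply]
    · ext i j; fin_cases i <;> fin_cases j <;> simp [Matrix.mul_apply, Fin.sum_univ_two]
  rw [hd]
  refine (norm_add_le _ _).trans ?_
  rw [norm_smul, norm_smul]
  nlinarith [norm_nonneg a, norm_nonneg b]

lemma aux_norm_one_le : ‖(1 : Matrix (Fin 2) (Fin 2) ℂ)‖ ≤ 1 :=
  aux_norm_le_one (by simp) (by simp)


lemma aux_exp_norm (r : ℝ) : ‖Complex.exp ((r:ℂ) * Complex.I)‖ = 1 := by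
  rw [Complex.norm_exp_ofReal_mul_I]

lemma aux_Qt_norm (q : ℝ → ℂ) (ξ : ℝ) (E Q Qt : ℝ → Matrix (Fin 2) (Fin 2) ℂ)
    (hE : ∀ x : ℝ, E x = !![Complex.exp (-(Complex.I) * ξ * x / 2), 0;
                             0, Complex.exp (Complex.I * ξ * x / 2)])
    (hQ : ∀ x : ℝ, Q x = (-Complex.I) •
              (q x • (!![0, 0; 1, 0] : Matrix (Fin 2) (Fin 2) ℂ)
               - conj (q x) • (!![0, 1; 0, 0] : Matrix (Fin 2) (Fin 2) ℂ)))
    (hQt : ∀ x : ℝ, Qt x = (-Complex.I) •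
              ((E x)⁻¹ * (!![1, 0; 0, -1] : Matrix (Fin 2) (Fin 2) ℂ) * Q x * E x)) :
    ∀ s : ℝ, ‖Qt s‖ ≤ 16 * ‖q s‖ := by
  intro s
  have he1 : ‖Complex.exp (-(Complex.I) * ξ * s / 2)‖ = 1 := by
    have : -(Complex.I) * (ξ:ℂ) * (s:ℂ) / 2 = ((-(ξ * s) / 2 : ℝ) : ℂ) * Complex.I := by
      push_cast; ring
    rw [this, aux_exp_norm]
  have he2 : ‖Complex.exp (Complex.I * ξ * s / 2)‖ = 1 := by
    have : (Complex.I) * (ξ:ℂ) * (s:ℂ) / 2 = (((ξ * s) / 2 : ℝ) : ℂ) * Complex.I := by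
      push_cast; ring
    rw [this, aux_exp_norm]
  have hEinv : (E s)⁻¹ = !![Complex.exp (Complex.I * ξ * s / 2), 0;
                            0, Complex.exp (-(Complex.I) * ξ * s / 2)] := by
    rw [hE s]
    apply Matrix.inv_eq_right_inv
    ext i j
    fin_cases i <;> fin_cases j <;>
      simp [Matrix.mul_apply, Fin.sum_univ_two, Matrix.one_apply, ← Complex.exp_add] <;>
      · ring_nf
        simp [Complex.exp_zero]
  have hnE : ‖E s‖ ≤ 2 := by
    rw [hE s]
    refine (aux_diag_norm _ _).trans ?_
    rw [he1, he2]; norm_num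
  have hnEinv : ‖(E s)⁻¹‖ ≤ 2 := by
    rw [hEinv]
    refine (aux_diag_norm _ _).trans ?_
    rw [he1, he2]; norm_num
  have hnS3 : ‖(!![1, 0; 0, -1] : Matrix (Fin 2) (Fin 2) ℂ)‖ ≤ 2 := by
    refine (aux_diag_norm _ _).trans ?_
    norm_num
  have hnQ : ‖Q s‖ ≤ 2 * ‖q s‖ := by
    rw [hQ s, norm_smul]
    have : ‖(-Complex.I : ℂ)‖ = 1 := by simp
    rw [this, one_mul]
    refine (norm_sub_le _ _).trans ?_
    rw [norm_smul, norm_smul]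
    have h1 : ‖q s‖ = ‖q s‖ := rfl
    have h2 : ‖(conj (q s) : ℂ)‖ = ‖q s‖ := by
      rw [Complex.norm_conj]
    rw [h1, h2]
    nlinarith [aux_sigmap, aux_sigmam, norm_nonneg (q s)]
  rw [hQt s, norm_smul]
  have : ‖(-Complex.I : ℂ)‖ = 1 := by simp
  rw [this, one_mul]
  have c1 : ‖(E s)⁻¹ * !![1, 0; 0, -1] * Q s * E s‖
      ≤ ‖(E s)⁻¹‖ * ‖(!![1, 0; 0, -1] : Matrix (Fin 2) (Fin 2) ℂ)‖ * ‖Q s‖ * ‖E s‖ := by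
    calc ‖(E s)⁻¹ * !![1, 0; 0, -1] * Q s * E s‖
        ≤ ‖(E s)⁻¹ * !![1, 0; 0, -1] * Q s‖ * ‖E s‖ := norm_mul_le _ _
      _ ≤ (‖(E s)⁻¹ * !![1, 0; 0, -1]‖ * ‖Q s‖) * ‖E s‖ :=
          mul_le_mul_of_nonneg_right (norm_mul_le _ _) (norm_nonneg _)
      _ ≤ ((‖(E s)⁻¹‖ * ‖(!![1, 0; 0, -1] : Matrix (Fin 2) (Fin 2) ℂ)‖) * ‖Q s‖) * ‖E s‖ := by
          refine mul_le_mul_of_nonneg_right (mul_le_mul_of_nonneg_right (norm_mul_le _ _)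
            (norm_nonneg _)) (norm_nonneg _)
  refine c1.trans ?_
  have h0 : (0:ℝ) ≤ ‖q s‖ := norm_nonneg _
  have t1 : ‖(E s)⁻¹‖ * ‖(!![1, 0; 0, -1] : Matrix (Fin 2) (Fin 2) ℂ)‖ ≤ 2 * 2 :=
    mul_le_mul hnEinv hnS3 (norm_nonneg _) (by norm_num)
  have t2 : ‖(E s)⁻¹‖ * ‖(!![1, 0; 0, -1] : Matrix (Fin 2) (Fin 2) ℂ)‖ * ‖Q s‖
      ≤ (2 * 2) * (2 * ‖q s‖) :=
    mul_le_mul t1 hnQ (norm_nonneg _) (by norm_num)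
  have t3 : ‖(E s)⁻¹‖ * ‖(!![1, 0; 0, -1] : Matrix (Fin 2) (Fin 2) ℂ)‖ * ‖Q s‖ * ‖E s‖
      ≤ ((2 * 2) * (2 * ‖q s‖)) * 2 :=
    mul_le_mul t2 hnE (norm_nonneg _) (by positivity)
  refine t3.trans (le_of_eq ?_)
  ring


/-- Bound for the solution of the backward Volterra equation
`Y(x) = I − ∫_x^∞ Q̃(s) Y(s) ds`: closeness to the identity. Here `Q̃ = −i E⁻¹ σ₃ Q E` and
`Q = −i (q σ₋ − conj(q) σ₊)`, with an absolute constant `C`. -/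
theorem stmt9 :
    ∃ C : ℝ, 0 < C ∧
      ∀ (q : ℝ → ℂ), Integrable q →
        ∀ (ξ : ℝ) (E Q Qt Y : ℝ → Matrix (Fin 2) (Fin 2) ℂ),
          (∀ x : ℝ, E x = !![Complex.exp (-(Complex.I) * ξ * x / 2), 0;
                             0, Complex.exp (Complex.I * ξ * x / 2)]) →
          (∀ x : ℝ, Q x = (-Complex.I) •
              (q x • (!![0, 0; 1, 0] : Matrix (Fin 2) (Fin 2) ℂ)
               - conj (q x) • (!![0, 1; 0, 0] : Matrix (Fin 2) (Fin 2) ℂ))) →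
          (∀ x : ℝ, Qt x = (-Complex.I) •
              ((E x)⁻¹ * (!![1, 0; 0, -1] : Matrix (Fin 2) (Fin 2) ℂ) * Q x * E x)) →
          (∀ x : ℝ, Y x = 1 - ∫ s in Set.Ioi x, Qt s * Y s) →
          ∀ x : ℝ, ‖Y x - 1‖ ≤ C * (∫ s in Set.Ioi x, ‖q s‖) * Real.exp (C * ∫ s in Set.Ioi x, ‖q s‖) := by
  refine ⟨200, by norm_num, ?_⟩
  intro q hq ξ E Q Qt Y hE hQ hQt hY x
  have hqabs : Integrable (fun s => ‖q s‖) := by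
    simpa using hq.norm
  set G := ∫ s in Set.Ioi x, ‖q s‖ with hGdef
  have hG0 : 0 ≤ G := setIntegral_nonneg measurableSet_Ioi fun s _ => norm_nonneg _
  have hRpos : (0:ℝ) ≤ 200 * G * Real.exp (200 * G) := by positivity
  set f : ℝ → Matrix (Fin 2) (Fin 2) ℂ := fun s => Qt s * Y s with hfdef
  by_cases hfi : IntegrableOn f (Set.Ioi x) volume
  case neg =>
    rw [hY x, integral_undef hfi]
    simpa using hRpos
  -- main case
  set K : ℝ → ℝ := fun s => 16 * ‖q s‖ with hKdef
  have hKint : Integrable K := hqabs.const_mul 16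
  have hK0 : ∀ s, 0 ≤ K s := fun s => by positivity
  have hQtn := aux_Qt_norm q ξ E Q Qt hE hQ hQt
  have hfK : ∀ s, ‖f s‖ ≤ K s * ‖Y s‖ := fun s =>
    (norm_mul_le _ _).trans (mul_le_mul_of_nonneg_right (hQtn s) (norm_nonneg _))
  set g : ℝ → ℝ := fun t => ∫ s in Set.Ioi t, K s with hgdef
  have hg0 : ∀ t, 0 ≤ g t := fun t => setIntegral_nonneg measurableSet_Ioi fun s _ => hK0 s
  have hganti : Antitone g := by
    intro t₁ t₂ h
    exact setIntegral_mono_set hKint.integrableOn (ae_of_all _ hK0)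
      ((Set.Ioi_subset_Ioi h).eventuallyLE)
  have hg_split : ∀ τ t : ℝ, τ ≤ t → g τ = (∫ σ in Set.Ioc τ t, K σ) + g t := by
    intro τ t h
    have h1 : (∫ σ in Set.Ioc τ t ∪ Set.Ioi t, K σ)
        = (∫ σ in Set.Ioc τ t, K σ) + ∫ σ in Set.Ioi t, K σ :=
      setIntegral_union (Set.Ioc_disjoint_Ioi le_rfl) measurableSet_Ioi
        hKint.integrableOn hKint.integrableOn
    rw [Set.Ioc_union_Ioi_eq_Ioi h] at h1
    exact h1
  have hgcont : Continuous g := by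
    have hFcont : Continuous fun t => ∫ σ in (0:ℝ)..t, K σ :=
      intervalIntegral.continuous_primitive (fun a b => hKint.intervalIntegrable) 0
    have hgeq : g = fun t => g 0 - ∫ σ in (0:ℝ)..t, K σ := by
      funext t
      rcases le_total 0 t with h | h
      · rw [intervalIntegral.integral_of_le h]
        have := hg_split 0 t h
        simp only [MeasureTheory.integral_Ioc_eq_integral_Ioo] at this ⊢
        linarith
      · rw [intervalIntegral.integral_symm, intervalIntegral.integral_of_le h]
        have := hg_split t 0 h
        simp only [MeasureTheory.integral_Ioc_eq_integral_Ioo] at this ⊢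
        linarith
    rw [hgeq]
    exact continuous_const.sub hFcont
  have hgtend : Filter.Tendsto g Filter.atTop (nhds 0) := by
    have hgseq : Filter.Tendsto (fun n : ℕ => g n) Filter.atTop (nhds 0) := by
      have h := tendsto_setIntegral_of_antitone (f := K) (μ := volume)
        (s := fun n : ℕ => Set.Ioi (n:ℝ)) (fun i => measurableSet_Ioi)
        (fun i j hij => Set.Ioi_subset_Ioi (by exact_mod_cast hij)) ⟨0, hKint.integrableOn⟩
      have he : (⋂ n : ℕ, Set.Ioi (n:ℝ)) = ∅ := by
        ext y
        simp only [Set.mem_iInter, Set.mem_Ioi, Set.mem_empty_iff_false, iff_false, not_forall,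
          not_lt]
        obtain ⟨n, hn⟩ := exists_nat_ge y
        exact ⟨n, hn⟩
      rw [he] at h
      simpa using h
    rw [Metric.tendsto_atTop]
    intro ε hε
    obtain ⟨N, hN⟩ := Metric.tendsto_atTop.mp hgseq ε hε
    refine ⟨N, fun t ht => ?_⟩
    have h2 := hN N le_rfl
    rw [Real.dist_eq, sub_zero, abs_of_nonneg (hg0 _)] at h2 ⊢
    exact lt_of_le_of_lt (hganti ht) h2
  set u : ℝ → ℝ := fun τ => ‖Y τ‖ with hudef
  have hfint' : ∀ τ, x ≤ τ → IntegrableOn f (Set.Ioi τ) volume := fun τ h =>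
    hfi.mono_set (Set.Ioi_subset_Ioi h)
  have hYsub : ∀ τ : ℝ, Y τ - 1 = -∫ σ in Set.Ioi τ, f σ := by
    intro τ
    rw [hY τ]
    abel
  have hu1 : ∀ τ, x ≤ τ → u τ ≤ 1 + ∫ σ in Set.Ioi τ, ‖f σ‖ := by
    intro τ h
    have e1 : u τ = ‖1 + (Y τ - 1)‖ := by rw [add_sub_cancel]
    rw [e1]
    refine (norm_add_le _ _).trans ?_
    have h2 : ‖Y τ - 1‖ ≤ ∫ σ in Set.Ioi τ, ‖f σ‖ := by
      rw [hYsub τ, norm_neg]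
      exact norm_integral_le_integral_norm _
    have := aux_norm_one_le
    linarith
  set M : ℝ := 1 + ∫ σ in Set.Ioi x, ‖f σ‖ with hMdef
  have huM : ∀ τ, x ≤ τ → u τ ≤ M := by
    intro τ h
    refine (hu1 τ h).trans ?_
    have : (∫ σ in Set.Ioi τ, ‖f σ‖) ≤ ∫ σ in Set.Ioi x, ‖f σ‖ :=
      setIntegral_mono_set hfi.norm (ae_of_all _ fun σ => norm_nonneg _)
        ((Set.Ioi_subset_Ioi h).eventuallyLE)
    linarith
  set b : ℝ → ℝ := fun s => sSup (u '' Set.Ici s) with hbdef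
  have hbdd : ∀ s, x ≤ s → BddAbove (u '' Set.Ici s) := by
    intro s hs
    refine ⟨M, ?_⟩
    rintro _ ⟨τ, hτ, rfl⟩
    exact huM τ (hs.trans hτ)
  have hub : ∀ s, x ≤ s → ∀ τ, s ≤ τ → u τ ≤ b s := fun s hs τ hτ =>
    le_csSup (hbdd s hs) ⟨τ, hτ, rfl⟩
  have hb0 : ∀ s, x ≤ s → 0 ≤ b s := fun s hs =>
    (norm_nonneg (Y s)).trans (hub s hs s le_rfl)
  have hble : ∀ s, x ≤ s → ∀ B, (∀ τ, s ≤ τ → u τ ≤ B) → b s ≤ B := by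
    intro s hs B hB
    refine csSup_le ⟨u s, s, Set.self_mem_Ici, rfl⟩ ?_
    rintro _ ⟨τ, hτ, rfl⟩
    exact hB τ hτ
  have hIoc : ∀ s, x ≤ s → ∀ τ t, s ≤ τ → τ ≤ t →
      (∫ σ in Set.Ioc τ t, ‖f σ‖) ≤ b s * (g τ - g t) := by
    intro s hs τ t hsτ hτt
    have hsub : Set.Ioc τ t ⊆ Set.Ioi x := fun σ hσ => (hs.trans hsτ).trans_lt hσ.1
    have hint1 : IntegrableOn (fun σ => ‖f σ‖) (Set.Ioc τ t) volume := (hfi.mono_set hsub).norm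
    have hint2 : IntegrableOn (fun σ => K σ * b s) (Set.Ioc τ t) volume :=
      (hKint.mul_const _).integrableOn
    have hmono := setIntegral_mono_on hint1 hint2 measurableSet_Ioc (fun σ hσ => by
      refine (hfK σ).trans ?_
      exact mul_le_mul_of_nonneg_left (hub s hs σ (hsτ.trans hσ.1.le)) (hK0 σ))
    rw [MeasureTheory.integral_mul_const] at hmono
    have := hg_split τ t hτt
    calc (∫ σ in Set.Ioc τ t, ‖f σ‖) ≤ (∫ σ in Set.Ioc τ t, K σ) * b s := hmono
      _ = b s * (g τ - g t) := by rw [show (∫ σ in Set.Ioc τ t, K σ) = g τ - g t by linarith]; ring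
  have hIoi : ∀ s, x ≤ s → ∀ τ, s ≤ τ → (∫ σ in Set.Ioi τ, ‖f σ‖) ≤ b s * g τ := by
    intro s hs τ hsτ
    have hint1 : IntegrableOn (fun σ => ‖f σ‖) (Set.Ioi τ) volume :=
      (hfint' τ (hs.trans hsτ)).norm
    have hint2 : IntegrableOn (fun σ => K σ * b s) (Set.Ioi τ) volume :=
      (hKint.mul_const _).integrableOn
    have hmono := setIntegral_mono_on hint1 hint2 measurableSet_Ioi (fun σ hσ => by
      refine (hfK σ).trans ?_
      exact mul_le_mul_of_nonneg_left (hub s hs σ (hsτ.trans (le_of_lt hσ))) (hK0 σ))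
    rw [MeasureTheory.integral_mul_const] at hmono
    calc (∫ σ in Set.Ioi τ, ‖f σ‖) ≤ g τ * b s := hmono
      _ = b s * g τ := by ring
  have hA : ∀ s, x ≤ s → b s ≤ 1 + b s * g s := by
    intro s hs
    refine hble s hs _ (fun τ hτ => ?_)
    refine (hu1 τ (hs.trans hτ)).trans ?_
    have h1 := hIoi s hs τ hτ
    have h2 : b s * g τ ≤ b s * g s := mul_le_mul_of_nonneg_left (hganti hτ) (hb0 s hs)
    linarith
  have hmain : ∀ n : ℕ, ∀ s, x ≤ s → g s ≤ n / 2 → b s ≤ 3 ^ n := by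
    intro n
    induction n with
    | zero =>
      intro s hs hgs
      have hg : g s = 0 := le_antisymm (by simpa using hgs) (hg0 s)
      have := hA s hs
      rw [hg, mul_zero] at this
      simpa using this
    | succ n ih =>
      intro s hs hgs
      by_cases hc : g s ≤ n / 2
      · refine (ih s hs hc).trans ?_
        exact pow_le_pow_right₀ (by norm_num) (Nat.le_succ n)
      push_neg at hc
      push_cast at hgs
      rcases Nat.eq_zero_or_pos n with hn0 | hn
      · subst hn0
        have hgs' : g s ≤ 1/2 := by norm_num at hgs ⊢; linarith
        have h := hA s hs
        have h2 : b s * g s ≤ b s * (1/2) := mul_le_mul_of_nonneg_left hgs' (hb0 s hs)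
        have : b s ≤ 2 := by linarith
        norm_num
        linarith
      · have hhalf : (0:ℝ) < (n:ℝ) / 2 := by
          have : (0:ℝ) < (n:ℝ) := by exact_mod_cast hn
          linarith
        obtain ⟨T, hT1, hT2⟩ :=
          ((hgtend.eventually_lt_const hhalf).and (Filter.eventually_ge_atTop s)).exists
        have hIVT : ((n:ℝ)/2 : ℝ) ∈ Set.Icc (g T) (g s) := ⟨hT1.le, hc.le⟩
        obtain ⟨t, htmem, hgt⟩ := intermediate_value_Icc' hT2 hgcont.continuousOn hIVT
        have hst : s ≤ t := htmem.1
        have hxt : x ≤ t := hs.trans hst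
        have hbt : b t ≤ 3 ^ n := ih t hxt (le_of_eq hgt)
        have key : ∀ τ, s ≤ τ → u τ ≤ 3 ^ n + b s * (1/2) := by
          intro τ hτ
          by_cases hτt : τ ≤ t
          · have hsplit : (∫ σ in Set.Ioi τ, f σ)
                = (∫ σ in Set.Ioc τ t, f σ) + ∫ σ in Set.Ioi t, f σ := by
              have h1 : (∫ σ in Set.Ioc τ t ∪ Set.Ioi t, f σ)
                  = (∫ σ in Set.Ioc τ t, f σ) + ∫ σ in Set.Ioi t, f σ :=
                setIntegral_union (Set.Ioc_disjoint_Ioi le_rfl) measurableSet_Ioi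
                  (hfi.mono_set (fun σ hσ => (hs.trans hτ).trans_lt hσ.1))
                  (hfint' t hxt)
              rw [Set.Ioc_union_Ioi_eq_Ioi hτt] at h1
              exact h1
            have hYτ : Y τ = Y t - ∫ σ in Set.Ioc τ t, f σ := by
              rw [hY τ, hY t, hsplit]
              abel
            have h1 : u τ ≤ u t + ∫ σ in Set.Ioc τ t, ‖f σ‖ := by
              show ‖Y τ‖ ≤ _
              rw [hYτ]
              refine (norm_sub_le _ _).trans ?_
              exact add_le_add le_rfl (norm_integral_le_integral_norm _)
            have h2 := hIoc s hs τ t hτ hτt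
            have h3 : g τ - g t ≤ 1/2 := by
              have := hganti hτ
              rw [hgt]
              linarith
            have h4 : b s * (g τ - g t) ≤ b s * (1/2) :=
              mul_le_mul_of_nonneg_left h3 (hb0 s hs)
            have h5 : u t ≤ b t := hub t hxt t le_rfl
            linarith
          · push_neg at hτt
            have h5 := hub t hxt τ hτt.le
            have h0 : 0 ≤ b s * (1/2) := mul_nonneg (hb0 s hs) (by norm_num)
            linarith
        have hfin := hble s hs _ key
        have h3 : (3:ℝ) ^ (n+1) = 3 * 3 ^ n := by ring
        have hp : (0:ℝ) < 3 ^ n := pow_pos (by norm_num) n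
        linarith
  -- conclusion
  set m : ℕ := ⌈2 * g x⌉₊ with hmdef
  have hgx0 : 0 ≤ g x := hg0 x
  have hm : g x ≤ (m:ℝ)/2 := by
    have := Nat.le_ceil (2 * g x)
    linarith
  have hbx := hmain m x le_rfl hm
  have hmle : (m:ℝ) ≤ 2 * g x + 1 := by
    have := Nat.ceil_lt_add_one (show (0:ℝ) ≤ 2 * g x by linarith)
    linarith
  have hgxG : g x = 16 * G := by
    show (∫ s in Set.Ioi x, 16 * ‖q s‖) = 16 * G
    rw [hGdef, MeasureTheory.integral_const_mul]
  have hlog3 : Real.log 3 ≤ 2 := by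
    have := Real.add_one_le_exp (Real.log 3)
    have h2 : Real.log 3 ≤ 3 - 1 := by
      nlinarith [Real.exp_log (show (0:ℝ) < 3 by norm_num)]
    linarith
  have hlog3' : 0 ≤ Real.log 3 := Real.log_nonneg (by norm_num)
  have h3m : (3:ℝ) ^ m ≤ Real.exp (64 * G + 2) := by
    have e1 : (3:ℝ) ^ m = Real.exp ((m:ℝ) * Real.log 3) := by
      rw [Real.exp_nat_mul, Real.exp_log] <;> norm_num
    rw [e1]
    apply Real.exp_le_exp.2
    have : (m:ℝ) * Real.log 3 ≤ (2 * g x + 1) * 2 := by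
      nlinarith
    rw [hgxG] at this
    linarith
  have hfinal1 : ‖Y x - 1‖ ≤ b x * g x := by
    rw [hYsub x, norm_neg]
    exact (norm_integral_le_integral_norm _).trans (hIoi x le_rfl x le_rfl)
  have hexp2 : Real.exp 2 ≤ 8 := by
    have h1 : Real.exp 2 = Real.exp 1 * Real.exp 1 := by
      rw [← Real.exp_add]; norm_num
    nlinarith [Real.exp_one_lt_d9, Real.exp_pos 1]
  have he : Real.exp (64 * G) ≤ Real.exp (200 * G) := Real.exp_le_exp.2 (by nlinarith)
  have hchain : Real.exp (64 * G + 2) * (16 * G) ≤ 200 * G * Real.exp (200 * G) := by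
    have e1 : Real.exp (64 * G + 2) * (16 * G)
        = (Real.exp 2 * 16) * (G * Real.exp (64 * G)) := by
      rw [Real.exp_add]; ring
    have h1 : G * Real.exp (64 * G) ≤ G * Real.exp (200 * G) :=
      mul_le_mul_of_nonneg_left he hG0
    have h2 : (Real.exp 2 * 16) * (G * Real.exp (64 * G))
        ≤ (8 * 16) * (G * Real.exp (200 * G)) := by
      apply mul_le_mul (by linarith) h1 (mul_nonneg hG0 (Real.exp_pos _).le) (by norm_num)
    rw [e1]
    refine h2.trans ?_
    nlinarith [mul_nonneg hG0 (Real.exp_pos (200 * G)).le]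
  calc ‖Y x - 1‖ ≤ b x * g x := hfinal1
    _ ≤ Real.exp (64 * G + 2) * (16 * G) := by
        rw [hgxG]
        exact mul_le_mul_of_nonneg_right (hbx.trans h3m) (by linarith)
    _ ≤ 200 * G * Real.exp (200 * G) := hchain
end

section
/- Let f : ℝ → [0,∞) be a nonnegative function satisfying f(s) ≤ C_ℓ (1+|s|)^{−ℓ} for every ℓ ∈ ℕ (rapid decay), and let g_j(s) := Σ_{p=0}^{j} f(s − p). Then for every real x ≥ j + 1/2 and every y ∈ ℝ, | ∫_{s > j, |s−x| > 1} g_j(s) · (s−x)/((s−x)² + y²) ds | ≤ C for a constant C independent of j, x, y. -/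
open MeasureTheory Set

-- tail bound lemma
lemma tailbound (f : ℝ → ℝ) (hf0 : ∀ s, 0 ≤ f s) (C4 : ℝ)
    (hC4 : ∀ s : ℝ, f s ≤ C4 * (1 + |s|) ^ (-(4:ℝ))) (hint : Integrable f)
    (m : ℝ) (hm : 0 ≤ m) :
    ∫ t in Set.Ioi m, f t ≤ C4 * (1 + m) ^ (-(2:ℝ)) * ∫ t : ℝ, (1 + |t|) ^ (-(2:ℝ)) := by
  have hC4nn : 0 ≤ C4 := by
    have := hC4 0
    simpa using le_trans (hf0 0) this
  have hint2 : Integrable (fun t : ℝ => (1 + |t|) ^ (-(2:ℝ))) := by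
    have := integrable_one_add_norm (E := ℝ) (μ := volume) (r := 2) (by norm_num)
    simpa using this
  have key : ∀ t ∈ Set.Ioi m, f t ≤ C4 * (1 + m) ^ (-(2:ℝ)) * (1 + |t|) ^ (-(2:ℝ)) := by
    intro t ht
    have ht' : m < t := ht
    have h1 : (0:ℝ) < 1 + m := by linarith
    have h2 : 1 + m ≤ 1 + |t| := by
      have : m ≤ |t| := le_trans (le_of_lt ht') (le_abs_self t)
      linarith
    have h3 : (1 + |t|) ^ (-(2:ℝ)) ≤ (1 + m) ^ (-(2:ℝ)) :=
      Real.rpow_le_rpow_of_nonpos h1 h2 (by norm_num)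
    calc f t ≤ C4 * (1 + |t|) ^ (-(4:ℝ)) := hC4 t
      _ = C4 * ((1 + |t|) ^ (-(2:ℝ)) * (1 + |t|) ^ (-(2:ℝ))) := by
          rw [← Real.rpow_add (by positivity)]; norm_num
      _ ≤ C4 * ((1 + m) ^ (-(2:ℝ)) * (1 + |t|) ^ (-(2:ℝ))) := by
          apply mul_le_mul_of_nonneg_left _ hC4nn
          exact mul_le_mul_of_nonneg_right h3 (by positivity)
      _ = C4 * (1 + m) ^ (-(2:ℝ)) * (1 + |t|) ^ (-(2:ℝ)) := by ring
  calc ∫ t in Set.Ioi m, f t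
      ≤ ∫ t in Set.Ioi m, C4 * (1 + m) ^ (-(2:ℝ)) * (1 + |t|) ^ (-(2:ℝ)) := by
        apply setIntegral_mono_on hint.integrableOn
          ((hint2.const_mul _).integrableOn) measurableSet_Ioi key
    _ = C4 * (1 + m) ^ (-(2:ℝ)) * ∫ t in Set.Ioi m, (1 + |t|) ^ (-(2:ℝ)) := by
        rw [integral_const_mul]
    _ ≤ C4 * (1 + m) ^ (-(2:ℝ)) * ∫ t : ℝ, (1 + |t|) ^ (-(2:ℝ)) := by
        apply mul_le_mul_of_nonneg_left _ (by positivity)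
        exact setIntegral_le_integral hint2 (ae_of_all _ fun t => by positivity)

/-- Uniform bound for the far tail integral: for a nonnegative rapidly decaying `f`,
`g_j(s) = Σ_{p=0}^j f(s-p)`, and any `x ≥ j + 1/2`, `y ∈ ℝ`, the integral of
`g_j(s) (s-x)/((s-x)²+y²)` over `{s > j, |s-x| > 1}` is bounded uniformly in `j, x, y`. -/
theorem stmt14 (f : ℝ → ℝ) (hmeas : Measurable f) (hf0 : ∀ s, 0 ≤ f s)
    (hdecay : ∀ ℓ : ℕ, ∃ Cℓ : ℝ, ∀ s : ℝ, f s ≤ Cℓ * (1 + |s|) ^ (-(ℓ : ℝ))) :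
    ∃ C : ℝ, ∀ (j : ℕ) (x y : ℝ), (j : ℝ) + 1 / 2 ≤ x →
      |∫ s in {s : ℝ | (j : ℝ) < s ∧ 1 < |s - x|},
          (∑ p ∈ Finset.range (j + 1), f (s - (p : ℝ))) *
            ((s - x) / ((s - x) ^ 2 + y ^ 2))| ≤ C := by
  obtain ⟨C2, hC2⟩ := hdecay 2
  obtain ⟨C4, hC4⟩ := hdecay 4
  have hC2' : ∀ s : ℝ, f s ≤ C2 * (1 + |s|) ^ (-(2:ℝ)) := by
    intro s; have := hC2 s; simp only [Nat.cast_ofNat] at this; exact this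
  have hC4' : ∀ s : ℝ, f s ≤ C4 * (1 + |s|) ^ (-(4:ℝ)) := by
    intro s; have := hC4 s; simp only [Nat.cast_ofNat] at this; exact this
  have hC4nn : 0 ≤ C4 := by
    have := hC4' 0; simpa using le_trans (hf0 0) this
  have hint2 : Integrable (fun t : ℝ => (1 + |t|) ^ (-(2:ℝ))) := by
    have := integrable_one_add_norm (E := ℝ) (μ := volume) (r := 2) (by norm_num)
    simpa using this
  have hintf : Integrable f := by
    refine (hint2.const_mul C2).mono' hmeas.aestronglyMeasurable (ae_of_all _ fun s => ?_)
    rw [Real.norm_eq_abs, abs_of_nonneg (hf0 s)]; exact hC2' s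
  set I2 : ℝ := ∫ t : ℝ, (1 + |t|) ^ (-(2:ℝ)) with hI2def
  have hI2 : 0 ≤ I2 := integral_nonneg fun t => by positivity
  have hsum : Summable (fun k : ℕ => (1 + (k:ℝ)) ^ (-(2:ℝ))) := by
    have h := (Real.summable_one_div_nat_rpow (p := 2)).2 (by norm_num)
    have h2 := (summable_nat_add_iff 1).2 h
    refine h2.congr fun n => ?_
    rw [one_div, ← Real.rpow_neg (by positivity)]
    push_cast; ring_nf
  set T : ℝ := ∑' k : ℕ, (1 + (k:ℝ)) ^ (-(2:ℝ)) with hTdef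
  refine ⟨C4 * I2 * T, ?_⟩
  intro j x y _
  set S : Set ℝ := {s : ℝ | (j : ℝ) < s ∧ 1 < |s - x|} with hSdef
  have hS : MeasurableSet S := by
    apply MeasurableSet.inter
    · exact measurableSet_Ioi
    · exact measurableSet_lt measurable_const (measurable_id.sub_const x).abs
  have hSsub : S ⊆ Set.Ioi (j:ℝ) := fun s hs => hs.1
  set g : ℝ → ℝ := fun s => ∑ p ∈ Finset.range (j + 1), f (s - (p:ℝ)) with hgdef
  have hg0 : ∀ s, 0 ≤ g s := fun s => Finset.sum_nonneg fun p _ => hf0 _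
  have hgmeas : Measurable g := by
    apply Finset.measurable_sum
    intro p _
    exact hmeas.comp (measurable_id.sub_const _)
  have hgint : Integrable g := by
    apply integrable_finset_sum
    intro p _
    exact hintf.comp_sub_right (p:ℝ)
  have hK : ∀ s ∈ S, |(s - x) / ((s - x) ^ 2 + y ^ 2)| ≤ 1 := by
    intro s hs
    have h1 : 1 < |s - x| := hs.2
    have hd : (0:ℝ) < (s - x) ^ 2 + y ^ 2 := by nlinarith [sq_abs (s - x), sq_nonneg y]
    rw [abs_div, abs_of_pos hd, div_le_one hd]
    nlinarith [sq_abs (s - x), sq_nonneg y, abs_nonneg (s - x)]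
  have hKmeas : Measurable (fun s : ℝ => (s - x) / ((s - x) ^ 2 + y ^ 2)) := by fun_prop
  -- step 1
  have hGKint : IntegrableOn (fun s => g s * ((s - x) / ((s - x) ^ 2 + y ^ 2))) S := by
    refine (hgint.integrableOn).mono' ((hgmeas.mul hKmeas).aestronglyMeasurable) ?_
    rw [ae_restrict_iff' hS]
    refine ae_of_all _ fun s hs => ?_
    rw [Real.norm_eq_abs, abs_mul, abs_of_nonneg (hg0 s)]
    calc g s * |(s - x) / ((s - x) ^ 2 + y ^ 2)| ≤ g s * 1 :=
          mul_le_mul_of_nonneg_left (hK s hs) (hg0 s)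
      _ = g s := mul_one _
  have step1 : |∫ s in S, g s * ((s - x) / ((s - x) ^ 2 + y ^ 2))| ≤ ∫ s in S, g s := by
    have habs := norm_integral_le_integral_norm
      (μ := volume.restrict S) (f := fun s => g s * ((s - x) / ((s - x) ^ 2 + y ^ 2)))
    simp only [Real.norm_eq_abs] at habs
    refine le_trans habs ?_
    refine setIntegral_mono_on hGKint.abs hgint.integrableOn hS fun s hs => ?_
    rw [abs_mul, abs_of_nonneg (hg0 s)]
    calc g s * |(s - x) / ((s - x) ^ 2 + y ^ 2)| ≤ g s * 1 :=
          mul_le_mul_of_nonneg_left (hK s hs) (hg0 s)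
      _ = g s := mul_one _
  have step2 : ∫ s in S, g s ≤ ∫ s in Set.Ioi (j:ℝ), g s := by
    apply setIntegral_mono_set hgint.integrableOn (ae_of_all _ hg0)
    exact HasSubset.Subset.eventuallyLE hSsub
  have htrans : ∀ p : ℕ, ∫ s in Set.Ioi (j:ℝ), f (s - (p:ℝ)) = ∫ t in Set.Ioi ((j:ℝ) - p), f t := by
    intro p
    have heq : ∀ s : ℝ, (Set.Ioi (j:ℝ)).indicator (fun s => f (s - (p:ℝ))) s
        = (Set.Ioi ((j:ℝ) - p)).indicator f (s - (p:ℝ)) := by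
      intro s
      by_cases h : s ∈ Set.Ioi (j:ℝ)
      · rw [Set.indicator_of_mem h, Set.indicator_of_mem]
        simp only [Set.mem_Ioi] at h ⊢; linarith
      · rw [Set.indicator_of_notMem h, Set.indicator_of_notMem]
        simp only [Set.mem_Ioi] at h ⊢; linarith
    rw [← integral_indicator measurableSet_Ioi, ← integral_indicator measurableSet_Ioi]
    calc ∫ s, (Set.Ioi (j:ℝ)).indicator (fun s => f (s - (p:ℝ))) s
        = ∫ s, (Set.Ioi ((j:ℝ) - p)).indicator f (s - (p:ℝ)) := by simp_rw [heq]
      _ = ∫ t, (Set.Ioi ((j:ℝ) - p)).indicator f t :=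
          integral_sub_right_eq_self ((Set.Ioi ((j:ℝ) - p)).indicator f) (p:ℝ)
  have step3 : ∫ s in Set.Ioi (j:ℝ), g s
      = ∑ p ∈ Finset.range (j + 1), ∫ t in Set.Ioi ((j:ℝ) - p), f t := by
    simp only [hgdef]
    rw [integral_finset_sum (Finset.range (j + 1))
      (f := fun (p : ℕ) (s : ℝ) => f (s - (p:ℝ)))
      (fun p _ => (hintf.comp_sub_right (p:ℝ)).integrableOn)]
    exact Finset.sum_congr rfl fun p _ => htrans p
  have step4 : ∑ p ∈ Finset.range (j + 1), ∫ t in Set.Ioi ((j:ℝ) - p), f t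
      ≤ ∑ p ∈ Finset.range (j + 1), C4 * (1 + ((j:ℝ) - p)) ^ (-(2:ℝ)) * I2 := by
    apply Finset.sum_le_sum
    intro p hp
    have hp' : p ≤ j := Nat.lt_succ_iff.mp (Finset.mem_range.mp hp)
    have hm : (0:ℝ) ≤ (j:ℝ) - p := by
      have : (p:ℝ) ≤ (j:ℝ) := Nat.cast_le.mpr hp'
      linarith
    exact tailbound f hf0 C4 hC4' hintf _ hm
  have hre : ∑ p ∈ Finset.range (j + 1), C4 * (1 + ((j:ℝ) - p)) ^ (-(2:ℝ)) * I2
      = ∑ k ∈ Finset.range (j + 1), C4 * (1 + (k:ℝ)) ^ (-(2:ℝ)) * I2 := by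
    rw [← Finset.sum_range_reflect]
    refine Finset.sum_congr rfl fun k hk => ?_
    have hk' : k ≤ j := Nat.lt_succ_iff.mp (Finset.mem_range.mp hk)
    congr 3
    rw [Nat.sub_sub, Nat.cast_sub (by omega : 1 + k ≤ j + 1)]
    push_cast
    ring
  have step5 : ∑ k ∈ Finset.range (j + 1), C4 * (1 + (k:ℝ)) ^ (-(2:ℝ)) * I2 ≤ C4 * I2 * T := by
    have : ∑ k ∈ Finset.range (j + 1), C4 * (1 + (k:ℝ)) ^ (-(2:ℝ)) * I2
        = C4 * I2 * ∑ k ∈ Finset.range (j + 1), (1 + (k:ℝ)) ^ (-(2:ℝ)) := by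
      rw [Finset.mul_sum]; exact Finset.sum_congr rfl fun k _ => by ring
    rw [this]
    apply mul_le_mul_of_nonneg_left _ (by positivity)
    exact Summable.sum_le_tsum _ (fun k _ => by positivity) hsum
  calc |∫ s in S, g s * ((s - x) / ((s - x) ^ 2 + y ^ 2))| ≤ ∫ s in S, g s := step1
    _ ≤ ∫ s in Set.Ioi (j:ℝ), g s := step2
    _ = ∑ p ∈ Finset.range (j + 1), ∫ t in Set.Ioi ((j:ℝ) - p), f t := step3
    _ ≤ ∑ p ∈ Finset.range (j + 1), C4 * (1 + ((j:ℝ) - p)) ^ (-(2:ℝ)) * I2 := step4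
    _ = ∑ k ∈ Finset.range (j + 1), C4 * (1 + (k:ℝ)) ^ (-(2:ℝ)) * I2 := hre
    _ ≤ C4 * I2 * T := step5
end

section
/- Let h : ℝ → [0,∞) be nonnegative with Lipschitz constant at most C on (j, ∞) (i.e. |h'(s)| ≤ C there) and h(s) ≤ C for s > j. Then for x ≥ j + 1/2 and any y ∈ ℝ, | ∫_{s > j, |s−x| < 1} h(s) (s−x)/((s−x)²+y²) ds | ≤ C' for a constant C' depending only on C. -/
open MeasureTheory Set

/-- Uniform bound for the near-diagonal integral: if `h ≥ 0` is bounded by `C` and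
Lipschitz with constant `C` on `(j, ∞)`, then for `x ≥ j + 1/2` and any `y`,
the integral of `h(s)(s−x)/((s−x)²+y²)` over `{s > j, |s−x| < 1}` is bounded by a
constant `C'` depending only on `C`. -/
theorem stmt16 (C : ℝ) (hC : 0 ≤ C) :
    ∃ C' : ℝ, ∀ (j x y : ℝ) (h : ℝ → ℝ),
      (∀ s, 0 ≤ h s) →
      (∀ s t : ℝ, j < s → j < t → |h s - h t| ≤ C * |s - t|) →
      (∀ s : ℝ, j < s → h s ≤ C) →
      j + 1 / 2 ≤ x →
      |∫ s in {s : ℝ | j < s ∧ |s - x| < 1},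
          h s * ((s - x) / ((s - x) ^ 2 + y ^ 2))| ≤ C' := by
  refine ⟨4 * C, ?_⟩
  intro j x y h hpos hlip hbd hx
  set a : ℝ := max j (x - 1) with ha
  set b : ℝ := x + 1 with hb
  have hja : j ≤ a := le_max_left _ _
  have haxh : a ≤ x - 1 / 2 := by
    apply max_le <;> linarith
  have hax1 : x - 1 ≤ a := le_max_right _ _
  have hjx : j < x := by linarith
  have hab : a < b := by simp only [hb]; linarith
  have hS : {s : ℝ | j < s ∧ |s - x| < 1} = Set.Ioo a b := by
    ext s
    simp only [Set.mem_setOf_eq, Set.mem_Ioo, abs_lt, ha, hb, max_lt_iff]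
    constructor
    · rintro ⟨h1, h2, h3⟩; exact ⟨⟨h1, by linarith⟩, by linarith⟩
    · rintro ⟨⟨h1, h2⟩, h3⟩; exact ⟨h1, by linarith, by linarith⟩
  rw [hS]
  have hSsub : Set.Ioo a b ⊆ Set.Ioi j := fun s hs => lt_of_le_of_lt hja hs.1
  have hcont : ContinuousOn h (Set.Ioi j) := by
    refine LipschitzOnWith.continuousOn (K := C.toNNReal) ?_
    apply LipschitzOnWith.of_dist_le_mul
    intro s hs t ht
    simpa [Real.dist_eq, Real.coe_toNNReal C hC] using hlip s t hs ht
  have hmeas : AEStronglyMeasurable (fun s => h s * ((s - x) / ((s - x) ^ 2 + y ^ 2)))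
      (volume.restrict (Set.Ioo a b)) := by
    apply AEStronglyMeasurable.mul
    · exact ((hcont.mono hSsub).aestronglyMeasurable measurableSet_Ioo)
    · exact (Measurable.div (by fun_prop) (by fun_prop)).aestronglyMeasurable.restrict
  have hvol : (volume (Set.Ioo a b)).toReal ≤ 2 := by
    rw [Real.volume_Ioo, ENNReal.toReal_ofReal_eq_iff.2 (by linarith)]
    linarith
  have hvolfin : volume (Set.Ioo a b) < ⊤ := by
    rw [Real.volume_Ioo]; exact ENNReal.ofReal_lt_top
  rcases eq_or_ne y 0 with hy | hy
  · -- y = 0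
    subst hy
    rcases eq_or_ne (h x) 0 with hhx | hhx
    · -- h x = 0 : integrand bounded by C
      have hbdd : ∀ s ∈ Set.Ioo a b, ‖h s * ((s - x) / ((s - x) ^ 2 + 0 ^ 2))‖ ≤ C := by
        intro s hs
        have hjs : j < s := hSsub hs
        have hhs : h s ≤ C * |s - x| := by
          have := hlip s x hjs hjx
          rw [hhx] at this
          simpa using (abs_le.mp (by simpa using this)).2
        rcases eq_or_ne s x with rfl | hsx
        · simp [hC]
        · have hd : s - x ≠ 0 := sub_ne_zero.2 hsx
          have habs : |s - x| ≠ 0 := abs_ne_zero.2 hd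
          have h1 : |(s - x) / ((s - x) ^ 2 + 0 ^ 2)| = |s - x|⁻¹ := by
            have h2 : (s - x) ^ 2 + 0 ^ 2 = |s - x| * |s - x| := by
              rw [← sq_abs (s - x)]; ring
            rw [abs_div, abs_of_nonneg (show (0:ℝ) ≤ (s - x) ^ 2 + 0 ^ 2 by positivity), h2,
              div_mul_cancel_left₀ habs]
          rw [norm_mul, Real.norm_eq_abs, Real.norm_eq_abs, abs_of_nonneg (hpos s), h1]
          calc h s * |s - x|⁻¹ ≤ (C * |s - x|) * |s - x|⁻¹ :=
                mul_le_mul_of_nonneg_right hhs (by positivity)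
            _ = C := by field_simp
      calc |∫ s in Set.Ioo a b, h s * ((s - x) / ((s - x) ^ 2 + 0 ^ 2))|
          ≤ C * (volume (Set.Ioo a b)).toReal :=
            norm_setIntegral_le_of_norm_le_const hvolfin hbdd
        _ ≤ 4 * C := by nlinarith [ENNReal.toReal_nonneg (a := volume (Set.Ioo a b))]
    · -- h x ≠ 0 : not integrable, integral = 0
      have hCpos : 0 < h x := (hpos x).lt_of_ne (Ne.symm hhx)
      have hC0 : 0 < C := lt_of_lt_of_le hCpos (hbd x hjx)
      have hnotint : ¬ IntegrableOn (fun s => h s * ((s - x) / ((s - x) ^ 2 + 0 ^ 2)))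
          (Set.Ioo a b) volume := by
        intro hint
        have hii : IntervalIntegrable (fun s => h s * ((s - x) / ((s - x) ^ 2 + 0 ^ 2)))
            volume a b := (intervalIntegrable_iff_integrableOn_Ioo_of_le hab.le).2 hint
        refine not_intervalIntegrable_of_sub_inv_isBigO_punctured (c := x) ?_ hab.ne
          (by rw [Set.uIcc_of_le hab.le]; exact ⟨by linarith, by linarith⟩) hii
        rw [Asymptotics.isBigO_iff]
        refine ⟨2 / h x, ?_⟩
        have hev : ∀ᶠ s in nhds x, |s - x| < min (1/2) (h x / (2 * C)) := by
          have : Continuous fun s : ℝ => |s - x| := by fun_prop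
          have h0 : (0:ℝ) < min (1/2) (h x / (2 * C)) := by positivity
          have := this.tendsto x
          simp only [sub_self, abs_zero] at this
          exact this.eventually_lt_const h0
        filter_upwards [eventually_nhdsWithin_of_eventually_nhds hev,
          self_mem_nhdsWithin] with s hsd hsx
        have hsx' : s ≠ x := hsx
        have hd : s - x ≠ 0 := sub_ne_zero.2 hsx'
        have hjs : j < s := by
          have := (abs_lt.1 (lt_of_lt_of_le hsd (min_le_left _ _))).1
          linarith
        have hhs : h x / 2 ≤ h s := by
          have hl := hlip s x hjs hjx
          have h2 : |s - x| ≤ h x / (2 * C) := (lt_of_lt_of_le hsd (min_le_right _ _)).le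
          have : h x - h s ≤ C * (h x / (2 * C)) := by
            calc h x - h s ≤ |h s - h x| := by rw [abs_sub_comm]; exact le_abs_self _
              _ ≤ C * |s - x| := hl
              _ ≤ C * (h x / (2 * C)) := by nlinarith [abs_nonneg (s - x)]
          have hCC : C * (h x / (2 * C)) = h x / 2 := by field_simp
          linarith [hCC ▸ this]
        have hker : (s - x) / ((s - x) ^ 2 + 0 ^ 2) = (s - x)⁻¹ := by
          field_simp
          ring
        rw [hker]
        simp only [Real.norm_eq_abs, abs_mul, abs_inv, abs_of_nonneg (hpos s)]
        have hinv : 0 < |s - x|⁻¹ := by positivity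
        calc |s - x|⁻¹ = (2 / h x) * ((h x / 2) * |s - x|⁻¹) := by field_simp
          _ ≤ (2 / h x) * (h s * |s - x|⁻¹) := by
              apply mul_le_mul_of_nonneg_left _ (by positivity)
              exact mul_le_mul_of_nonneg_right hhs hinv.le
      rw [integral_undef hnotint]
      simp
      positivity
  · -- y ≠ 0 : main case
    have hypos : ∀ s : ℝ, 0 < (s - x) ^ 2 + y ^ 2 := fun s => by positivity
    set k : ℝ → ℝ := fun s => (s - x) / ((s - x) ^ 2 + y ^ 2) with hk
    have hk_cont : Continuous k :=
      Continuous.div (by fun_prop) (by fun_prop) (fun s => (hypos s).ne')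
    have hbd2 : ∀ s ∈ Set.Ioo a b, ‖(h s - h x) * k s‖ ≤ C := by
      intro s hs
      have h1 : |h s - h x| ≤ C * |s - x| := hlip s x (hSsub hs) hjx
      have e1 : |k s| = |s - x| / ((s - x) ^ 2 + y ^ 2) := by
        rw [hk]; rw [abs_div, abs_of_pos (hypos s)]
      rw [norm_mul, Real.norm_eq_abs, Real.norm_eq_abs, e1, mul_div_assoc']
      rw [div_le_iff₀ (hypos s)]
      nlinarith [mul_le_mul_of_nonneg_right h1 (abs_nonneg (s - x)),
        abs_mul_abs_self (s - x), mul_nonneg hC (sq_nonneg y), abs_nonneg (s - x)]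
    have hint1 : IntegrableOn (fun s => h x * k s) (Set.Ioo a b) volume :=
      ((continuous_const.mul hk_cont).integrableOn_Icc (a := a) (b := b)).mono_set
        Set.Ioo_subset_Icc_self
    have hmeas2 : AEStronglyMeasurable (fun s => (h s - h x) * k s)
        (volume.restrict (Set.Ioo a b)) := by
      apply AEStronglyMeasurable.mul
      · exact (((hcont.mono hSsub).sub continuousOn_const).aestronglyMeasurable
          measurableSet_Ioo)
      · exact hk_cont.aestronglyMeasurable.restrict
    have hint2 : IntegrableOn (fun s => (h s - h x) * k s) (Set.Ioo a b) volume := by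
      refine Integrable.mono' (g := fun _ => C) (integrableOn_const hvolfin.ne)
        hmeas2 ?_
      exact (ae_restrict_iff' measurableSet_Ioo).2 (Filter.Eventually.of_forall hbd2)
    have hsplit : ∫ s in Set.Ioo a b, h s * k s
        = h x * (∫ s in Set.Ioo a b, k s) + ∫ s in Set.Ioo a b, (h s - h x) * k s := by
      rw [← integral_const_mul, ← MeasureTheory.integral_add hint1 hint2]
      apply setIntegral_congr_fun measurableSet_Ioo
      intro s _
      ring
    set F : ℝ → ℝ := fun s => Real.log ((s - x) ^ 2 + y ^ 2) / 2 with hF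
    have hderiv : ∀ s ∈ Set.uIcc a b, HasDerivAt F (k s) s := by
      intro s _
      have h1 : HasDerivAt (fun s : ℝ => (s - x) ^ 2 + y ^ 2) (2 * (s - x)) s := by
        simpa using (((hasDerivAt_id s).sub_const x).pow 2).add_const (y ^ 2)
      have h2 := (h1.log (hypos s).ne').div_const 2
      have h3 : k s = 2 * (s - x) / ((s - x) ^ 2 + y ^ 2) / 2 := by
        simp only [hk]; ring
      rw [h3]; exact h2
    have hFTC : ∫ s in Set.Ioo a b, k s = F b - F a := by
      rw [← integral_Ioc_eq_integral_Ioo, ← intervalIntegral.integral_of_le hab.le]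
      exact intervalIntegral.integral_eq_sub_of_hasDerivAt hderiv
        (hk_cont.intervalIntegrable a b)
    have hbx : (b - x) ^ 2 = 1 := by rw [hb]; ring
    have haq : 0 < (a - x) ^ 2 + y ^ 2 := hypos a
    have hI0 : 0 ≤ F b - F a := by
      rw [hF]
      have : (a - x) ^ 2 + y ^ 2 ≤ (b - x) ^ 2 + y ^ 2 := by
        rw [hbx]; nlinarith
      have := Real.log_le_log haq this
      linarith
    have hI1 : F b - F a ≤ 3 / 2 := by
      rw [hF]
      have h4 : (b - x) ^ 2 + y ^ 2 ≤ 4 * ((a - x) ^ 2 + y ^ 2) := by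
        rw [hbx]; nlinarith
      have hlog4 : Real.log ((b - x) ^ 2 + y ^ 2)
          ≤ Real.log 4 + Real.log ((a - x) ^ 2 + y ^ 2) := by
        rw [← Real.log_mul (by norm_num) haq.ne']
        exact Real.log_le_log (hypos b) h4
      have : Real.log 4 ≤ 3 := by
        have := Real.log_le_sub_one_of_pos (show (0:ℝ) < 4 by norm_num)
        linarith
      linarith
    have hT2 : |∫ s in Set.Ioo a b, (h s - h x) * k s| ≤ C * 2 := by
      calc |∫ s in Set.Ioo a b, (h s - h x) * k s|
          ≤ C * (volume (Set.Ioo a b)).toReal :=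
            norm_setIntegral_le_of_norm_le_const hvolfin hbd2
        _ ≤ C * 2 := mul_le_mul_of_nonneg_left hvol hC
    have hT1 : |h x * (∫ s in Set.Ioo a b, k s)| ≤ C * (3 / 2) := by
      rw [hFTC, abs_mul, abs_of_nonneg (hpos x), abs_of_nonneg hI0]
      exact mul_le_mul (hbd x hjx) hI1 hI0 hC
    calc |∫ s in Set.Ioo a b, h s * k s|
        ≤ |h x * (∫ s in Set.Ioo a b, k s)| + |∫ s in Set.Ioo a b, (h s - h x) * k s| := by
          rw [hsplit]; exact abs_add_le _ _
      _ ≤ C * (3 / 2) + C * 2 := add_le_add hT1 hT2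
      _ ≤ 4 * C := by linarith
end
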